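/- arXiv:0711.2460 — 5 statements merged into one kernel-verified Lean document; each statement's English description precedes it below -/
import Mathlib

section
/- For p ≥ 2, q = p/(p-1), δ = q(q-1)/8, and u, v ≥ 0 with u^p ≥ v^q, the function φ(u,v) = (1 + 2δ/p)u^p + (1 + (2/q - 1)δ)v^q satisfies u·∂φ/∂u + v·∂φ/∂v − φ(u,v) ≥ (p−1)u^{p−2}·u² + (q−1)·u^{2−p}·v². -/
open Real

theorem stmt_0 (p q δ u v : ℝ) (hp : 2 ≤ p) (hq : q = p / (p - 1))
    (hδ : δ = q * (q - 1) / 8) (hu : 0 ≤ u) (hv : 0 ≤ v)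
    (huv : v ^ q ≤ u ^ p) :
    u * ((1 + 2 * δ / p) * (p * u ^ (p - 1))) +
      v * ((1 + (2 / q - 1) * δ) * (q * v ^ (q - 1))) -
      ((1 + 2 * δ / p) * u ^ p + (1 + (2 / q - 1) * δ) * v ^ q) ≥
    (p - 1) * u ^ (p - 2) * u ^ 2 + (q - 1) * u ^ (2 - p) * v ^ 2 := by
  have hp0 : (0:ℝ) < p := by linarith
  have hp1 : (0:ℝ) < p - 1 := by linarith
  have hq1 : 1 < q := by
    rw [hq, lt_div_iff₀ hp1]; linarith
  have hq2 : q ≤ 2 := by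
    rw [hq, div_le_iff₀ hp1]; nlinarith
  have hq0 : (0:ℝ) < q := by linarith
  have hδ0 : (0:ℝ) ≤ δ := by rw [hδ]; nlinarith
  have hc2 : (0:ℝ) ≤ 2 / q - 1 := by
    rw [le_sub_iff_add_le, le_div_iff₀ hq0]; linarith
  have hpq : (p - 1) * q = p := by
    rw [hq]; field_simp
  rcases eq_or_lt_of_le hu with hu0 | hu0
  · -- u = 0
    have hvq0 : v ^ q = 0 := le_antisymm (by
      simpa [← hu0, Real.zero_rpow hp0.ne'] using huv) (Real.rpow_nonneg hv q)
    have hv0 : v = 0 := (Real.rpow_eq_zero hv hq0.ne').mp hvq0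
    rw [← hu0, hv0]
    simp [Real.zero_rpow hp0.ne', Real.zero_rpow hq0.ne']
  · -- u > 0
    have key : u ^ (2 - p) * v ^ 2 ≤ v ^ q := by
      rcases eq_or_lt_of_le hv with hv0 | hv0
      · simp [← hv0, Real.zero_rpow hq0.ne']
      · have h1 : v ≤ u ^ (p - 1) :=
          (Real.rpow_le_rpow_iff hv (Real.rpow_nonneg hu _) hq0).mp
            (by rw [← Real.rpow_mul hu, hpq]; exact huv)
        have hexp : (p - 1) * (2 - q) = p - 2 := by linear_combination -hpq
        have h2 : v ^ (2 - q) ≤ u ^ (p - 2) := by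
          calc v ^ (2 - q) ≤ (u ^ (p - 1)) ^ (2 - q) :=
                Real.rpow_le_rpow hv h1 (by linarith)
            _ = u ^ ((p - 1) * (2 - q)) := (Real.rpow_mul hu _ _).symm
            _ = u ^ (p - 2) := by rw [hexp]
        have hv2 : (v:ℝ) ^ (2:ℕ) = v ^ q * v ^ (2 - q) := by
          rw [← Real.rpow_add hv0, add_sub_cancel, ← Real.rpow_natCast v 2]
          norm_num
        calc u ^ (2 - p) * v ^ 2 = (u ^ (2 - p) * v ^ (2 - q)) * v ^ q := by
              rw [hv2]; ring
          _ ≤ (u ^ (2 - p) * u ^ (p - 2)) * v ^ q :=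
              mul_le_mul_of_nonneg_right
                (mul_le_mul_of_nonneg_left h2 (Real.rpow_nonneg hu _))
                (Real.rpow_nonneg hv q)
          _ = v ^ q := by
              rw [← Real.rpow_add hu0]; simp
    have e1 : u * u ^ (p - 1) = u ^ p := by
      nth_rewrite 1 [← Real.rpow_one u]
      rw [← Real.rpow_add hu0]; ring_nf
    have e2 : u ^ (p - 2) * u ^ 2 = u ^ p := by
      rw [← Real.rpow_natCast u 2, ← Real.rpow_add hu0]; norm_num
    have e3 : v * v ^ (q - 1) = v ^ q := by
      rcases eq_or_lt_of_le hv with hv0 | hv0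
      · simp [← hv0, Real.zero_rpow hq0.ne']
      · nth_rewrite 1 [← Real.rpow_one v]
        rw [← Real.rpow_add hv0]; ring_nf
    have E1 : u * ((1 + 2 * δ / p) * (p * u ^ (p - 1))) = (1 + 2 * δ / p) * p * u ^ p := by
      rw [← e1]; ring
    have E3 : v * ((1 + (2 / q - 1) * δ) * (q * v ^ (q - 1))) = (1 + (2 / q - 1) * δ) * q * v ^ q := by
      rw [← e3]; ring
    have E2 : (p - 1) * u ^ (p - 2) * u ^ 2 = (p - 1) * u ^ p := by
      rw [← e2]; ring
    rw [E1, E3, E2]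
    have hcp : 2 * δ / p * p = 2 * δ := by field_simp
    have heq : (2 / q - 1) * q = 2 - q := by field_simp
    have hvq : (0:ℝ) ≤ v ^ q := Real.rpow_nonneg hv q
    have hup : (0:ℝ) ≤ u ^ p := Real.rpow_nonneg hu p
    have hd : 0 ≤ 2 * δ / p := by positivity
    nlinarith [mul_nonneg (mul_nonneg (mul_nonneg hc2 hδ0) (by linarith : (0:ℝ) ≤ q - 1)) hvq,
      mul_nonneg (mul_nonneg hd hp1.le) hup,
      mul_le_mul_of_nonneg_left key (by linarith : (0:ℝ) ≤ q - 1)]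
end

section
/- For p ≥ 2, q = p/(p-1), δ = q(q-1)/8, and u, v ≥ 0 with u^p ≤ v^q and v > 0, the function φ(u,v) = u^p + v^q + δu²v^{2−q} satisfies u·∂φ/∂u + v·∂φ/∂v − φ(u,v) ≥ δ(v^{q−2}·v² + v^{2−q}·u²). -/
open Real

theorem stmt_1 (p q δ u v : ℝ) (hp : 2 ≤ p) (hq : q = p / (p - 1))
    (hδ : δ = q * (q - 1) / 8) (hu : 0 ≤ u) (hv : 0 < v)
    (huv : u ^ p ≤ v ^ q) :
    u * (p * u ^ (p - 1) + 2 * δ * u * v ^ (2 - q)) +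
      v * (q * v ^ (q - 1) + (2 - q) * δ * u ^ 2 * v ^ (1 - q)) -
      (u ^ p + v ^ q + δ * u ^ 2 * v ^ (2 - q)) ≥
    δ * (v ^ (q - 2) * v ^ 2 + v ^ (2 - q) * u ^ 2) := by
  have hp1 : (1:ℝ) < p := by linarith
  have hq1 : 1 < q := by
    rw [hq, lt_div_iff₀ (by linarith)]
    linarith
  have hq2 : q ≤ 2 := by
    rw [hq, div_le_iff₀ (by linarith)]
    linarith
  have hδ0 : 0 ≤ δ := by rw [hδ]; nlinarith
  have hδq : δ ≤ q - 1 := by rw [hδ]; nlinarith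
  have hup : u * u ^ (p - 1) = u ^ p := by
    rw [show p = 1 + (p - 1) from by ring, Real.rpow_add' hu (by linarith), Real.rpow_one]
    ring_nf
  have hvq : v * v ^ (q - 1) = v ^ q := by
    have h := Real.rpow_add hv 1 (q - 1)
    rw [Real.rpow_one, show (1:ℝ) + (q - 1) = q from by ring] at h
    exact h.symm
  have hv2q : v * v ^ (1 - q) = v ^ (2 - q) := by
    have h := Real.rpow_add hv 1 (1 - q)
    rw [Real.rpow_one, show (1:ℝ) + (1 - q) = 2 - q from by ring] at h
    exact h.symm
  have hvq2 : v ^ (q - 2) * v ^ 2 = v ^ q := by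
    rw [show (v:ℝ) ^ 2 = v ^ ((2:ℝ)) from (Real.rpow_two v).symm, ← Real.rpow_add hv]
    norm_num
  have ha : 0 ≤ u ^ p := Real.rpow_nonneg hu p
  have hb : 0 < v ^ q := Real.rpow_pos_of_pos hv q
  have hc : 0 < v ^ (2 - q) := Real.rpow_pos_of_pos hv (2 - q)
  have hu2 : 0 ≤ u ^ 2 := sq_nonneg u
  have e1 : u * (p * u ^ (p - 1) + 2 * δ * u * v ^ (2 - q)) =
      p * u ^ p + 2 * δ * u ^ 2 * v ^ (2 - q) := by rw [← hup]; ring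
  have e2 : v * (q * v ^ (q - 1) + (2 - q) * δ * u ^ 2 * v ^ (1 - q)) =
      q * v ^ q + (2 - q) * δ * u ^ 2 * v ^ (2 - q) := by rw [← hvq, ← hv2q]; ring
  rw [e1, e2, hvq2]
  nlinarith [mul_nonneg (mul_nonneg (sub_nonneg.mpr hq2) hδ0) (mul_nonneg hu2 hc.le),
    mul_nonneg (sub_nonneg.mpr hp1.le) ha,
    mul_nonneg (sub_nonneg.mpr hδq) hb.le]
end

section
/- For 1 < q ≤ 2, u, v > 0 with u^p ≤ v^q (where p is the conjugate exponent of q), and any A, B ≥ 0, the quantity Z − 2V − W, where Z = (pu^{p−2} + 2δv^{2−q})A² + ((2−q)δu²v^{−q} + qv^{q−2})B², V = 2δ(2−q)uv^{1−q}AB, W = (2−q)q(δu²v^{−q} + v^{q−2})B², and δ = q(q−1)/8, satisfies Z − 2V − W ≥ δ(v^{2−q}A² + 3v^{q−2}B²). -/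
open Real

lemma key_ineq (P X Y s t q δ A B : ℝ) (hδ : δ = q * (q - 1) / 8)
    (hq1 : 1 < q) (hq2 : q ≤ 2)
    (hX : 0 < X) (hY : 0 < Y) (hXY : X * Y = 1) (hs : 0 ≤ s) (hsY : s ≤ Y)
    (ht : 0 ≤ t) (ht1 : t ≤ 1) (hP : 0 ≤ P) (hA : 0 ≤ A) (hB : 0 ≤ B) :
    ((P + 2 * δ * X) * A ^ 2 + ((2 - q) * δ * s + q * Y) * B ^ 2) -
      2 * (2 * δ * (2 - q) * t * A * B) - (2 - q) * q * (δ * s + Y) * B ^ 2 ≥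
    δ * (X * A ^ 2 + 3 * Y * B ^ 2) := by
  subst hδ
  have hδ0 : 0 ≤ q * (q - 1) / 8 := by nlinarith
  have term1 : 0 ≤ X * A ^ 2 - 4 * (A * B) + 4 * (Y * B ^ 2) := by
    have h := mul_nonneg hY.le (sq_nonneg (X * A - 2 * B))
    have e1 : Y * (X * A - 2 * B) ^ 2
        = X * (X * Y) * A ^ 2 - 4 * (X * Y) * (A * B) + 4 * (Y * B ^ 2) := by ring
    rw [hXY] at e1
    nlinarith [h, e1]
  have het : (2 - q) * t ≤ 1 := by nlinarith
  have term3 : 0 ≤ (1 - (2 - q) * t) * (A * B) :=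
    mul_nonneg (by linarith) (mul_nonneg hA hB)
  have hef : (2 - q) * (q - 1) ≤ 1 / 4 := by nlinarith [sq_nonneg (2 * q - 3)]
  have term4 : 0 ≤ (1 - (2 - q) * (q - 1)) * (Y * B ^ 2) :=
    mul_nonneg (by linarith) (mul_nonneg hY.le (sq_nonneg B))
  have term2 : 0 ≤ (2 - q) * (q - 1) * ((Y - s) * B ^ 2) :=
    mul_nonneg (mul_nonneg (by linarith) (by linarith))
      (mul_nonneg (by linarith) (sq_nonneg B))
  nlinarith [mul_nonneg hδ0 term1, mul_nonneg hδ0 term3, mul_nonneg hδ0 term4,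
    mul_nonneg hδ0 term2, mul_nonneg hP (sq_nonneg A)]

theorem stmt_2 (p q δ u v A B : ℝ) (hq1 : 1 < q) (hq2 : q ≤ 2)
    (hp : p = q / (q - 1)) (hδ : δ = q * (q - 1) / 8)
    (hu : 0 < u) (hv : 0 < v) (huv : u ^ p ≤ v ^ q)
    (hA : 0 ≤ A) (hB : 0 ≤ B) :
    ((p * u ^ (p - 2) + 2 * δ * v ^ (2 - q)) * A ^ 2 +
        ((2 - q) * δ * u ^ 2 * v ^ (-q) + q * v ^ (q - 2)) * B ^ 2) -
      2 * (2 * δ * (2 - q) * u * v ^ (1 - q) * A * B) -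
      (2 - q) * q * (δ * u ^ 2 * v ^ (-q) + v ^ (q - 2)) * B ^ 2 ≥
    δ * (v ^ (2 - q) * A ^ 2 + 3 * v ^ (q - 2) * B ^ 2) := by
  have hq1' : (0:ℝ) < q - 1 := by linarith
  have hp0 : 0 < p := by rw [hp]; positivity
  have h1 : u ≤ v ^ (q - 1) := by
    have hvq : (v ^ (q - 1) : ℝ) ^ p = v ^ q := by
      rw [← Real.rpow_mul hv.le]
      congr 1
      rw [hp]; field_simp [hq1'.ne']
    rw [← hvq] at huv
    exact (Real.rpow_le_rpow_iff hu.le (Real.rpow_pos_of_pos hv _).le hp0).mp huv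
  have hX : 0 < v ^ (2 - q) := Real.rpow_pos_of_pos hv _
  have hY : 0 < v ^ (q - 2) := Real.rpow_pos_of_pos hv _
  have hXY : v ^ (2 - q) * v ^ (q - 2) = 1 := by
    rw [← Real.rpow_add hv]; norm_num
  have hs : 0 ≤ u ^ 2 * v ^ (-q) := by positivity
  have hsY : u ^ 2 * v ^ (-q) ≤ v ^ (q - 2) := by
    have h2 : u ^ 2 ≤ (v ^ (q - 1)) ^ 2 := by
      nlinarith [Real.rpow_pos_of_pos hv (q-1)]
    have h3 : (v ^ (q - 1) : ℝ) ^ 2 * v ^ (-q) = v ^ (q - 2) := by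
      rw [← Real.rpow_natCast (v ^ (q-1)) 2, ← Real.rpow_mul hv.le, ← Real.rpow_add hv]
      norm_num; ring_nf
    calc u ^ 2 * v ^ (-q) ≤ (v ^ (q - 1)) ^ 2 * v ^ (-q) :=
          mul_le_mul_of_nonneg_right h2 (Real.rpow_pos_of_pos hv _).le
      _ = v ^ (q - 2) := h3
  have ht : 0 ≤ u * v ^ (1 - q) := by positivity
  have ht1 : u * v ^ (1 - q) ≤ 1 := by
    have : (v ^ (q - 1) : ℝ) * v ^ (1 - q) = 1 := by
      rw [← Real.rpow_add hv]; norm_num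
    calc u * v ^ (1 - q) ≤ v ^ (q - 1) * v ^ (1 - q) :=
          mul_le_mul_of_nonneg_right h1 (Real.rpow_pos_of_pos hv _).le
      _ = 1 := this
  have hP : 0 ≤ p * u ^ (p - 2) := by positivity
  have h := key_ineq (p * u ^ (p - 2)) (v ^ (2 - q)) (v ^ (q - 2))
    (u ^ 2 * v ^ (-q)) (u * v ^ (1 - q)) q δ A B hδ hq1 hq2 hX hY hXY hs hsY ht ht1 hP hA hB
  linarith [h]
end

section
/- For every t > 0 and x ∈ ℝⁿ, (2π)^{−n/2} ∫_{ℝⁿ} K_t(x,y) dy = (cosh 2t)^{−n/2} exp(−|x|² tanh(2t)/2); in particular this is at most 1. -/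
open Real MeasureTheory

/-- The Hermite (Mehler) heat kernel on ℝⁿ. -/
noncomputable def hermiteHeatKernel (n : ℕ) (t : ℝ) (x y : EuclideanSpace ℝ (Fin n)) : ℝ :=
  (Real.sinh (2 * t)) ^ (-(n : ℝ) / 2) *
    Real.exp (-(‖x‖ ^ 2 + ‖y‖ ^ 2) / 2 * (Real.cosh (2 * t) / Real.sinh (2 * t)) +
      (inner ℝ x y : ℝ) / Real.sinh (2 * t))

lemma gauss_aux (n : ℕ) {b : ℝ} (hb : 0 < b) (a : ℝ) (w : EuclideanSpace ℝ (Fin n)) :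
    ∫ v : EuclideanSpace ℝ (Fin n), Real.exp (-b * ‖v‖ ^ 2 + a * (inner ℝ w v : ℝ)) =
      (π / b) ^ ((n : ℝ) / 2) * Real.exp (a ^ 2 * ‖w‖ ^ 2 / (4 * b)) := by
  have h := GaussianFourier.integral_cexp_neg_mul_sq_norm_add
    (V := EuclideanSpace ℝ (Fin n)) (b := (b : ℂ)) (by simpa using hb) (a : ℂ) w
  rw [finrank_euclideanSpace_fin] at h
  rw [← Complex.ofReal_inj]
  push_cast
  rw [Complex.ofReal_cpow (by positivity : (0:ℝ) ≤ π / b)]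
  push_cast
  rw [← h]
  norm_cast

theorem stmt_6 (n : ℕ) (t : ℝ) (ht : 0 < t) (x : EuclideanSpace ℝ (Fin n)) :
    (2 * π) ^ (-(n : ℝ) / 2) * ∫ y, hermiteHeatKernel n t x y =
        (Real.cosh (2 * t)) ^ (-(n : ℝ) / 2) *
          Real.exp (-‖x‖ ^ 2 * Real.tanh (2 * t) / 2) ∧
      (2 * π) ^ (-(n : ℝ) / 2) * ∫ y, hermiteHeatKernel n t x y ≤ 1 := by
  have hs : 0 < Real.sinh (2 * t) := Real.sinh_pos_iff.2 (by linarith)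
  have hc : 0 < Real.cosh (2 * t) := Real.cosh_pos _
  set s := Real.sinh (2 * t) with hs_def
  set c := Real.cosh (2 * t) with hc_def
  have hcc : c ^ 2 = s ^ 2 + 1 := by rw [hs_def, hc_def]; exact Real.cosh_sq _
  have hb : 0 < c / (2 * s) := by positivity
  have key : ∫ y, hermiteHeatKernel n t x y =
      s ^ (-(n : ℝ) / 2) * Real.exp (-(c / (2 * s)) * ‖x‖ ^ 2) *
        ((π / (c / (2 * s))) ^ ((n : ℝ) / 2) *
          Real.exp ((1 / s) ^ 2 * ‖x‖ ^ 2 / (4 * (c / (2 * s))))) := by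
    rw [← gauss_aux n hb (1 / s) x, ← integral_const_mul]
    congr 1 with y
    unfold hermiteHeatKernel
    rw [mul_assoc, ← Real.exp_add]
    rw [← hs_def, ← hc_def]
    congr 2
    field_simp
    ring
  have main : (2 * π) ^ (-(n : ℝ) / 2) * ∫ y, hermiteHeatKernel n t x y =
      c ^ (-(n : ℝ) / 2) * Real.exp (-‖x‖ ^ 2 * Real.tanh (2 * t) / 2) := by
    rw [key]
    have htanh : Real.tanh (2 * t) = s / c := Real.tanh_eq_sinh_div_cosh _
    have hr : π / (c / (2 * s)) = 2 * π * s / c := by field_simp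
    have hpow : (2 * π) ^ (-(n : ℝ) / 2) * s ^ (-(n : ℝ) / 2) *
        (2 * π * s / c) ^ ((n : ℝ) / 2) = c ^ (-(n : ℝ) / 2) := by
      rw [Real.div_rpow (by positivity) hc.le, Real.mul_rpow (by positivity) hs.le,
        neg_div, Real.rpow_neg (by positivity), Real.rpow_neg hs.le,
        Real.rpow_neg hc.le]
      field_simp
    have hexp : Real.exp (-(c / (2 * s)) * ‖x‖ ^ 2) *
        Real.exp ((1 / s) ^ 2 * ‖x‖ ^ 2 / (4 * (c / (2 * s)))) =
        Real.exp (-‖x‖ ^ 2 * (s / c) / 2) := by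
      rw [← Real.exp_add]
      congr 1
      field_simp
      linear_combination (-4 * ‖x‖ ^ 2) * hcc
    rw [hr, htanh, ← hpow, ← hexp]
    ring
  refine ⟨main, ?_⟩
  rw [main]
  have h1 : c ^ (-(n : ℝ) / 2) ≤ 1 := by
    apply Real.rpow_le_one_of_one_le_of_nonpos
    · rw [hc_def]; exact Real.one_le_cosh _
    · rw [neg_div]; exact neg_nonpos.2 (by positivity)
  have h2 : Real.exp (-‖x‖ ^ 2 * Real.tanh (2 * t) / 2) ≤ 1 := by
    rw [Real.exp_le_one_iff]
    have : 0 ≤ Real.tanh (2 * t) := by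
      rw [Real.tanh_eq_sinh_div_cosh]; positivity
    have h0 : (0:ℝ) ≤ ‖x‖ ^ 2 := by positivity
    nlinarith
  have h3 : 0 ≤ c ^ (-(n : ℝ) / 2) := by positivity
  calc c ^ (-(n : ℝ) / 2) * Real.exp (-‖x‖ ^ 2 * Real.tanh (2 * t) / 2)
      ≤ 1 * 1 := by apply mul_le_mul h1 h2 (Real.exp_pos _).le (by norm_num)
    _ = 1 := by norm_num
end

section
/- For t > 0 and x, y ∈ ℝⁿ, the subordinated kernel P_t(x,y) = (2π)^{−n/2} ∫_0^∞ K_{t²/(4s)}(x,y) dμ(s), where K is the Hermite heat kernel and dμ(s) = π^{−1/2}e^{−s}s^{−1/2}ds, satisfies P_t(x,y) ≤ Γ((n+1)/2) π^{−(n+1)/2} t (|x−y|² + t²)^{−(n+1)/2}, i.e. the Hermite Poisson kernel is dominated by the classical Poisson kernel of ℝⁿ. -/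
open Real MeasureTheory

lemma sinh_le_mul_cosh {t : ℝ} (ht : 0 ≤ t) : Real.sinh t ≤ t * Real.cosh t := by
  rcases eq_or_lt_of_le ht with h | h
  · simp [← h]
  · obtain ⟨c, hc, hc'⟩ := exists_hasDerivAt_eq_slope Real.sinh Real.cosh h
      (Real.continuous_sinh.continuousOn) (fun x _ => Real.hasDerivAt_sinh x)
    have h2 : Real.cosh c ≤ Real.cosh t := by
      rw [Real.cosh_le_cosh, abs_of_nonneg hc.1.le, abs_of_nonneg ht]
      exact hc.2.le
    field_simp at hc'
    nlinarith [Real.sinh_zero, mul_le_mul_of_nonneg_right h2 h.le]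

lemma key_ineq_s10 {t : ℝ} (ht : 0 < t) : Real.sinh (2 * t) ≤ t * (Real.cosh (2 * t) + 1) := by
  have h1 : Real.sinh (2 * t) = 2 * Real.sinh t * Real.cosh t := Real.sinh_two_mul t
  have h2 : Real.cosh (2 * t) = Real.cosh t ^ 2 + Real.sinh t ^ 2 := Real.cosh_two_mul t
  have h2' : Real.cosh t ^ 2 - Real.sinh t ^ 2 = 1 := Real.cosh_sq_sub_sinh_sq t
  have h3 := sinh_le_mul_cosh ht.le
  have h4 : (0:ℝ) < Real.cosh t := Real.cosh_pos t
  nlinarith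

lemma exp_ineq {t a b p : ℝ} (ht : 0 < t) (h1 : 0 ≤ a + b - 2 * p) (h2 : 0 ≤ a + b + 2 * p) :
    -(a + b) / 2 * (Real.cosh (2 * t) / Real.sinh (2 * t)) + p / Real.sinh (2 * t) ≤
      -(a + b - 2 * p) / (4 * t) := by
  have hS : 0 < Real.sinh (2 * t) := Real.sinh_pos_iff.2 (by linarith)
  have hC : 1 ≤ Real.cosh (2 * t) := Real.one_le_cosh (2 * t)
  have hk := key_ineq_s10 ht
  have key : (-(a + b) / 2 * Real.cosh (2 * t) + p) / Real.sinh (2 * t) ≤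
      -(a + b - 2 * p) / (4 * t) := by
    rw [div_le_div_iff₀ hS (by positivity)]
    nlinarith [mul_nonneg h1 (sub_nonneg.2 hk),
      mul_nonneg (mul_nonneg h2 ht.le) (sub_nonneg.2 hC)]
  calc -(a + b) / 2 * (Real.cosh (2 * t) / Real.sinh (2 * t)) + p / Real.sinh (2 * t)
      = (-(a + b) / 2 * Real.cosh (2 * t) + p) / Real.sinh (2 * t) := by ring
    _ ≤ -(a + b - 2 * p) / (4 * t) := key

/-- The Hermite Poisson kernel, obtained by subordination. -/
noncomputable def hermitePoissonKernel (n : ℕ) (t : ℝ) (x y : EuclideanSpace ℝ (Fin n)) : ℝ :=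
  (2 * π) ^ (-(n : ℝ) / 2) *
    ∫ s in Set.Ioi (0 : ℝ),
      hermiteHeatKernel n (t ^ 2 / (4 * s)) x y *
        (π ^ (-(1 : ℝ) / 2) * Real.exp (-s) * s ^ (-(1 : ℝ) / 2))

lemma hk_le (n : ℕ) {t : ℝ} (ht : 0 < t) (x y : EuclideanSpace ℝ (Fin n)) :
    hermiteHeatKernel n t x y ≤
      (2 * t) ^ (-(n : ℝ) / 2) * Real.exp (-‖x - y‖ ^ 2 / (4 * t)) := by
  have hS : 2 * t < Real.sinh (2 * t) := Real.self_lt_sinh_iff.2 (by linarith)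
  have h1 : 0 ≤ ‖x‖ ^ 2 + ‖y‖ ^ 2 - 2 * (inner ℝ x y : ℝ) := by
    have := norm_sub_sq_real x y; nlinarith [sq_nonneg ‖x - y‖]
  have h2 : 0 ≤ ‖x‖ ^ 2 + ‖y‖ ^ 2 + 2 * (inner ℝ x y : ℝ) := by
    have := norm_add_sq_real x y; nlinarith [sq_nonneg ‖x + y‖]
  have hbase : Real.sinh (2 * t) ^ (-(n : ℝ) / 2) ≤ (2 * t) ^ (-(n : ℝ) / 2) :=
    Real.rpow_le_rpow_of_nonpos (by positivity) hS.le (by have : (0:ℝ) ≤ (n:ℝ) := Nat.cast_nonneg n; linarith)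
  have hexp : -(‖x‖ ^ 2 + ‖y‖ ^ 2) / 2 * (Real.cosh (2 * t) / Real.sinh (2 * t)) +
      (inner ℝ x y : ℝ) / Real.sinh (2 * t) ≤ -‖x - y‖ ^ 2 / (4 * t) := by
    have h := exp_ineq (a := ‖x‖ ^ 2) (b := ‖y‖ ^ 2) (p := (inner ℝ x y : ℝ)) ht h1 h2
    have hn : ‖x - y‖ ^ 2 = ‖x‖ ^ 2 + ‖y‖ ^ 2 - 2 * (inner ℝ x y : ℝ) := by
      have := norm_sub_sq_real x y; linarith
    rw [hn]; convert h using 2 <;> ring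
  unfold hermiteHeatKernel
  exact mul_le_mul hbase (Real.exp_le_exp.2 hexp) (Real.exp_pos _).le (by positivity)

theorem stmt_10 (n : ℕ) (t : ℝ) (ht : 0 < t) (x y : EuclideanSpace ℝ (Fin n)) :
    hermitePoissonKernel n t x y ≤
      Real.Gamma ((n + 1) / 2) * π ^ (-((n : ℝ) + 1) / 2) * t *
        (‖x - y‖ ^ 2 + t ^ 2) ^ (-((n : ℝ) + 1) / 2) := by
  have hπ : (0:ℝ) < π := Real.pi_pos
  set A := ‖x - y‖ ^ 2 with hA
  have hA0 : (0:ℝ) ≤ A := sq_nonneg _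
  set c : ℝ := A / t ^ 2 + 1 with hc
  have hc0 : (0:ℝ) < c := by positivity
  set Cc : ℝ := (t ^ 2 / 2) ^ (-(n : ℝ) / 2) * π ^ (-(1:ℝ) / 2) with hCc
  set w : ℝ := ((n:ℝ) + 1) / 2 with hw
  have hw0 : (0:ℝ) < w := by positivity
  set g : ℝ → ℝ := fun s => Cc * (s ^ (w - 1) * Real.exp (-(c * s))) with hg
  -- pointwise bound
  have hpt : ∀ s ∈ Set.Ioi (0:ℝ),
      hermiteHeatKernel n (t ^ 2 / (4 * s)) x y *
        (π ^ (-(1:ℝ)/2) * Real.exp (-s) * s ^ (-(1:ℝ)/2)) ≤ g s := by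
    intro s hs
    rw [Set.mem_Ioi] at hs
    have ht' : 0 < t ^ 2 / (4 * s) := by positivity
    have hk := hk_le n ht' x y
    have hwt : (0:ℝ) ≤ π ^ (-(1:ℝ)/2) * Real.exp (-s) * s ^ (-(1:ℝ)/2) := by positivity
    have step1 : hermiteHeatKernel n (t ^ 2 / (4 * s)) x y *
        (π ^ (-(1:ℝ)/2) * Real.exp (-s) * s ^ (-(1:ℝ)/2)) ≤
        ((2 * (t ^ 2 / (4 * s))) ^ (-(n : ℝ) / 2) *
          Real.exp (-A / (4 * (t ^ 2 / (4 * s))))) *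
          (π ^ (-(1:ℝ)/2) * Real.exp (-s) * s ^ (-(1:ℝ)/2)) := by
      exact mul_le_mul_of_nonneg_right hk hwt
    refine step1.trans_eq ?_
    have e2 : (2 * (t ^ 2 / (4 * s))) ^ (-(n:ℝ)/2) =
        (t ^ 2 / 2) ^ (-(n:ℝ)/2) * s ^ ((n:ℝ)/2) := by
      rw [show 2 * (t ^ 2 / (4 * s)) = (t ^ 2 / 2) * s⁻¹ by field_simp; ring,
        Real.mul_rpow (by positivity) (by positivity), Real.inv_rpow hs.le,
        ← Real.rpow_neg hs.le]
      congr 1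
      ring
    have e3 : Real.exp (-A / (4 * (t ^ 2 / (4 * s)))) * Real.exp (-s) =
        Real.exp (-(c * s)) := by
      rw [← Real.exp_add]
      congr 1
      rw [hc]
      field_simp
      ring
    have e4 : s ^ ((n:ℝ)/2) * s ^ (-(1:ℝ)/2) = s ^ (w - 1) := by
      rw [← Real.rpow_add hs, hw]
      congr 1
      ring
    rw [hg]
    calc ((2 * (t ^ 2 / (4 * s))) ^ (-(n : ℝ) / 2) *
          Real.exp (-A / (4 * (t ^ 2 / (4 * s))))) *
          (π ^ (-(1:ℝ)/2) * Real.exp (-s) * s ^ (-(1:ℝ)/2))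
        = ((t ^ 2 / 2) ^ (-(n:ℝ)/2) * π ^ (-(1:ℝ)/2)) *
          ((s ^ ((n:ℝ)/2) * s ^ (-(1:ℝ)/2)) *
            (Real.exp (-A / (4 * (t ^ 2 / (4 * s)))) * Real.exp (-s))) := by
          rw [e2]; ring
      _ = Cc * (s ^ (w - 1) * Real.exp (-(c * s))) := by rw [e3, e4, hCc]
  -- integrability of g
  have hgint : IntegrableOn g (Set.Ioi (0:ℝ)) := by
    have h0 : IntegrableOn (fun s : ℝ => s ^ (w - 1) * Real.exp (-c * s ^ (1:ℝ)))
        (Set.Ioi (0:ℝ)) :=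
      integrableOn_rpow_mul_exp_neg_mul_rpow (by linarith) one_pos hc0
    simp only [Real.rpow_one, neg_mul] at h0
    exact h0.const_mul Cc
  -- nonnegativity of f
  have hf0 : ∀ s ∈ Set.Ioi (0:ℝ), (0:ℝ) ≤
      hermiteHeatKernel n (t ^ 2 / (4 * s)) x y *
        (π ^ (-(1:ℝ)/2) * Real.exp (-s) * s ^ (-(1:ℝ)/2)) := by
    intro s hs
    rw [Set.mem_Ioi] at hs
    have ht' : 0 < t ^ 2 / (4 * s) := by positivity
    have hS : 0 < Real.sinh (2 * (t ^ 2 / (4 * s))) := Real.sinh_pos_iff.2 (by linarith)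
    unfold hermiteHeatKernel
    have := Real.rpow_nonneg hS.le (-(n:ℝ)/2)
    positivity
  -- monotone integral
  have hmono : (∫ s in Set.Ioi (0:ℝ),
      hermiteHeatKernel n (t ^ 2 / (4 * s)) x y *
        (π ^ (-(1:ℝ)/2) * Real.exp (-s) * s ^ (-(1:ℝ)/2))) ≤
      ∫ s in Set.Ioi (0:ℝ), g s := by
    refine integral_mono_of_nonneg ?_ hgint ?_
    · filter_upwards [ae_restrict_mem measurableSet_Ioi] with s hs
      simpa using hf0 s hs
    · filter_upwards [ae_restrict_mem measurableSet_Ioi] with s hs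
      exact hpt s hs
  -- value of ∫ g
  have hval : (∫ s in Set.Ioi (0:ℝ), g s) =
      Cc * ((1 / c) ^ w * Real.Gamma w) := by
    rw [hg]
    rw [MeasureTheory.integral_const_mul]
    rw [Real.integral_rpow_mul_exp_neg_mul_Ioi hw0 hc0]
  have hCc0 : (0:ℝ) ≤ (2 * π) ^ (-(n:ℝ)/2) := Real.rpow_nonneg (by positivity) _
  have final : (2 * π) ^ (-(n:ℝ)/2) * (Cc * ((1 / c) ^ w * Real.Gamma w)) =
      Real.Gamma w * π ^ (-((n : ℝ) + 1) / 2) * t * (A + t ^ 2) ^ (-w) := by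
    have hAt : (0:ℝ) < A + t ^ 2 := by positivity
    have f1 : (2 * π) ^ (-(n:ℝ)/2) * (t ^ 2 / 2) ^ (-(n:ℝ)/2) =
        π ^ (-(n:ℝ)/2) * (t ^ 2) ^ (-(n:ℝ)/2) := by
      rw [← Real.mul_rpow (by positivity) (by positivity),
        show (2 * π) * (t ^ 2 / 2) = π * t ^ 2 by ring,
        Real.mul_rpow hπ.le (by positivity)]
    have f3 : (1 / c) ^ w = (t ^ 2) ^ w * (A + t ^ 2) ^ (-w) := by
      rw [show (1 / c : ℝ) = t ^ 2 * (A + t ^ 2)⁻¹ by rw [hc]; field_simp,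
        Real.mul_rpow (by positivity) (by positivity), Real.inv_rpow hAt.le,
        ← Real.rpow_neg hAt.le]
    have f4 : π ^ (-(n:ℝ)/2) * π ^ (-(1:ℝ)/2) = π ^ (-((n : ℝ) + 1) / 2) := by
      rw [← Real.rpow_add hπ]
      congr 1
      ring
    have f5 : (t ^ 2) ^ (-(n:ℝ)/2) * (t ^ 2) ^ w = t := by
      rw [← Real.rpow_add (by positivity), hw,
        show -(n:ℝ)/2 + ((n:ℝ) + 1)/2 = 1/2 by ring,
        show (t ^ 2 : ℝ) = t ^ ((2:ℕ):ℝ) by rw [Real.rpow_natCast],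
        ← Real.rpow_mul ht.le,
        show ((2:ℕ):ℝ) * (1/2) = 1 by norm_num, Real.rpow_one]
    calc (2 * π) ^ (-(n:ℝ)/2) * (Cc * ((1 / c) ^ w * Real.Gamma w))
        = ((2 * π) ^ (-(n:ℝ)/2) * (t ^ 2 / 2) ^ (-(n:ℝ)/2)) *
          (π ^ (-(1:ℝ)/2) * ((1 / c) ^ w * Real.Gamma w)) := by rw [hCc]; ring
      _ = (π ^ (-(n:ℝ)/2) * (t ^ 2) ^ (-(n:ℝ)/2)) *
          (π ^ (-(1:ℝ)/2) * (((t ^ 2) ^ w * (A + t ^ 2) ^ (-w)) * Real.Gamma w)) := by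
          rw [f1, f3]
      _ = Real.Gamma w * (π ^ (-(n:ℝ)/2) * π ^ (-(1:ℝ)/2)) *
          ((t ^ 2) ^ (-(n:ℝ)/2) * (t ^ 2) ^ w) * (A + t ^ 2) ^ (-w) := by ring
      _ = Real.Gamma w * π ^ (-((n : ℝ) + 1) / 2) * t * (A + t ^ 2) ^ (-w) := by
          rw [f4, f5]
  have hfin : hermitePoissonKernel n t x y ≤
      (2 * π) ^ (-(n:ℝ)/2) * (Cc * ((1 / c) ^ w * Real.Gamma w)) := by
    rw [hermitePoissonKernel, ← hval]
    exact mul_le_mul_of_nonneg_left hmono hCc0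
  rw [final] at hfin
  convert hfin using 2
  rw [hw]
  congr 1
  ring
end
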